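/- arXiv:1112.0132 — 2 statements merged into one kernel-verified Lean document; each statement's English description precedes it below -/
import Mathlib

section
/- If D is a countable pseudo-Dedekind Prüfer domain, then D is of finite character. -/
/-- A domain is *pseudo-Dedekind* if the `v`-closure `(I⁻¹)⁻¹` of every nonzero
ideal `I` is invertible (as a fractional ideal). -/
def IsPseudoDedekind (R : Type*) [CommRing R] [IsDomain R] : Prop :=
  ∀ I : Ideal R, I ≠ ⊥ →
    IsUnit (((I : FractionalIdeal (nonZeroDivisors R) (FractionRing R))⁻¹)⁻¹)

/-- A *Prüfer domain* is a domain in which every nonzero finitely generated ideal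
is invertible. -/
def IsPruferDomain (R : Type*) [CommRing R] [IsDomain R] : Prop :=
  ∀ I : Ideal R, I.FG → I ≠ ⊥ →
    IsUnit (I : FractionalIdeal (nonZeroDivisors R) (FractionRing R))

/-- A domain has *finite character* if every nonzero element lies in only finitely
many maximal ideals. -/
def FiniteCharacter (R : Type*) [CommRing R] : Prop :=
  ∀ x : R, x ≠ 0 → {M : Ideal R | M.IsMaximal ∧ x ∈ M}.Finite

section Construction

variable {R : Type*} [CommRing R]

/-- Case 1 of the dichotomy: there is a maximal ideal `M0 ∋ x` such that every
finitely generated ideal between `(x)` and `M0` lies in infinitely many maximal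
ideals.  Then a pairwise comaximal family of proper f.g. ideals containing `x`
can be built by a chain construction inside `M0`. -/
theorem case_one_family (x : R) (M0 : Ideal R) (hM0 : M0.IsMaximal) (hxM0 : x ∈ M0)
    (h1 : ∀ I : Ideal R, I.FG → x ∈ I → I ≤ M0 →
      {N : Ideal R | N.IsMaximal ∧ I ≤ N}.Infinite) :
    ∃ I : ℕ → Ideal R, (∀ n, (I n).FG) ∧ (∀ n, x ∈ I n) ∧ (∀ n, I n ≠ ⊤) ∧
      ∀ m n, m ≠ n → I m ⊔ I n = ⊤ := by
  classical
  -- the state: a f.g. ideal `H` with `x ∈ H ≤ M0`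
  set T := {H : Ideal R // H.FG ∧ x ∈ H ∧ H ≤ M0} with hT
  have step : ∀ t : T, ∃ p : T × Ideal R,
      (t.1 ≤ p.1.1) ∧ (t.1 ≤ p.2) ∧ p.2.FG ∧ x ∈ p.2 ∧ p.2 ≠ ⊤ ∧ p.1.1 ⊔ p.2 = ⊤ := by
    rintro ⟨H, hHfg, hxH, hHM0⟩
    obtain ⟨N, hNmem, hNne⟩ :
        ∃ N, N ∈ {N : Ideal R | N.IsMaximal ∧ H ≤ N} ∧ N ∉ ({M0} : Set (Ideal R)) := by
      obtain ⟨N, hN⟩ := ((h1 H hHfg hxH hHM0).diff (Set.finite_singleton M0)).nonempty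
      exact ⟨N, hN.1, hN.2⟩
    obtain ⟨hNmax, hHN⟩ := hNmem
    rw [Set.mem_singleton_iff] at hNne
    have hsup : N ⊔ M0 = ⊤ := by
      by_contra hne
      have h2 : N = N ⊔ M0 := hNmax.eq_of_le hne le_sup_left
      have h3 : M0 ≤ N := h2 ▸ le_sup_right
      exact hNne (hM0.eq_of_le hNmax.ne_top h3).symm
    obtain ⟨n, hn, m, hm, hnm⟩ := Submodule.mem_sup.1 ((Ideal.eq_top_iff_one _).1 hsup)
    refine ⟨⟨⟨H ⊔ Ideal.span {m}, Submodule.FG.sup hHfg (Submodule.fg_span_singleton m),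
        Submodule.mem_sup_left hxH, sup_le hHM0 ((Ideal.span_le).2 (by simpa using hm))⟩,
        H ⊔ Ideal.span {n}⟩, le_sup_left, le_sup_left, Submodule.FG.sup hHfg (Submodule.fg_span_singleton n),
        Submodule.mem_sup_left hxH, ?_, ?_⟩
    · intro htop
      have hle : H ⊔ Ideal.span {n} ≤ N :=
        sup_le hHN ((Ideal.span_le).2 (by simpa using hn))
      exact hNmax.ne_top (top_le_iff.1 (htop ▸ hle))
    · rw [Ideal.eq_top_iff_one, ← hnm]
      exact Submodule.add_mem _
        (Submodule.mem_sup_right (Submodule.mem_sup_right (Ideal.mem_span_singleton_self n)))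
        (Submodule.mem_sup_left (Submodule.mem_sup_right (Ideal.mem_span_singleton_self m)))
  choose F hF1 hF1' hF2 hF3 hF4 hF5 using step
  have ht0 : ((Ideal.span {x} : Ideal R).FG ∧ x ∈ Ideal.span {x} ∧ Ideal.span {x} ≤ M0) :=
    ⟨Submodule.fg_span_singleton x, Ideal.mem_span_singleton_self x,
      (Ideal.span_le).2 (by simpa using hxM0)⟩
  set seq : ℕ → T := fun k => (fun t => (F t).1)^[k] ⟨Ideal.span {x}, ht0⟩ with hseq
  have hseqsucc : ∀ k, seq (k + 1) = (F (seq k)).1 := by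
    intro k
    simp only [hseq, Function.iterate_succ_apply']
  have hmono : Monotone fun k => (seq k).1 := by
    apply monotone_nat_of_le_succ
    intro k
    rw [hseqsucc k]
    exact hF1 (seq k)
  refine ⟨fun k => (F (seq k)).2, fun k => hF2 _, fun k => hF3 _, fun k => hF4 _, ?_⟩
  have key : ∀ m k, m < k → (F (seq m)).2 ⊔ (F (seq k)).2 = ⊤ := by
    intro m k hmk
    have h6 : (seq (m + 1)).1 ≤ (F (seq k)).2 := by
      calc (seq (m + 1)).1 ≤ (seq k).1 := hmono hmk
        _ ≤ (F (seq k)).2 := hF1' (seq k)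
    rw [eq_top_iff, ← hF5 (seq m), ← hseqsucc m]
    exact sup_le (le_trans h6 le_sup_right) le_sup_left
  intro m k hmk
  rcases lt_or_gt_of_ne hmk with h | h
  · exact key m k h
  · rw [sup_comm]; exact key k m h

/-- Case 2 of the dichotomy: every maximal ideal `M ∋ x` contains a finitely
generated ideal `I ∋ x` lying in only finitely many maximal ideals.  Then a
pairwise comaximal family is built greedily, avoiding finitely many used
maximal ideals at each step via prime avoidance. -/
theorem case_two_family (x : R) (hA : {M : Ideal R | M.IsMaximal ∧ x ∈ M}.Infinite)
    (h2 : ∀ M : Ideal R, M.IsMaximal → x ∈ M → ∃ I : Ideal R, I.FG ∧ x ∈ I ∧ I ≤ M ∧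
      {N : Ideal R | N.IsMaximal ∧ I ≤ N}.Finite) :
    ∃ I : ℕ → Ideal R, (∀ n, (I n).FG) ∧ (∀ n, x ∈ I n) ∧ (∀ n, I n ≠ ⊤) ∧
      ∀ m n, m ≠ n → I m ⊔ I n = ⊤ := by
  classical
  set T := {U : Set (Ideal R) // U.Finite ∧ ∀ N ∈ U, N.IsMaximal} with hT
  have step : ∀ t : T, ∃ p : Ideal R × T, p.1.FG ∧ x ∈ p.1 ∧ p.1 ≠ ⊤ ∧
      t.1 ⊆ p.2.1 ∧ {N : Ideal R | N.IsMaximal ∧ p.1 ≤ N} ⊆ p.2.1 ∧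
      ∀ N ∈ t.1, ¬ p.1 ≤ N := by
    rintro ⟨U, hUfin, hUmax⟩
    obtain ⟨M, hMmem, hMU⟩ :
        ∃ M, M ∈ {M : Ideal R | M.IsMaximal ∧ x ∈ M} ∧ M ∉ U := by
      obtain ⟨M, hM⟩ := (hA.diff hUfin).nonempty
      exact ⟨M, hM.1, hM.2⟩
    obtain ⟨hMmax, hxM⟩ := hMmem
    obtain ⟨I0, hI0fg, hxI0, hI0M, hI0fin⟩ := h2 M hMmax hxM
    -- prime avoidance: pick `c ∈ M` avoiding all ideals of `U`
    obtain ⟨c, hcM, hcU⟩ : ∃ c ∈ M, c ∉ ⋃ N ∈ (↑hUfin.toFinset : Set (Ideal R)), (N : Set R) := by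
      have hnot : ¬ ((M : Set R) ⊆ ⋃ N ∈ (↑hUfin.toFinset : Set (Ideal R)), (N : Set R)) := by
        rw [Ideal.subset_union_prime (⊤ : Ideal R) (⊤ : Ideal R)
          (fun N hN _ _ => (hUmax N (hUfin.mem_toFinset.1 hN)).isPrime)]
        rintro ⟨N, hNs, hMN⟩
        have hNU := hUfin.mem_toFinset.1 hNs
        exact hMU ((hMmax.eq_of_le (hUmax N hNU).ne_top hMN) ▸ hNU)
      obtain ⟨c, hc1, hc2⟩ := Set.not_subset.1 hnot
      exact ⟨c, hc1, hc2⟩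
    refine ⟨⟨I0 ⊔ Ideal.span {c},
      ⟨U ∪ {N : Ideal R | N.IsMaximal ∧ I0 ≤ N}, hUfin.union hI0fin,
        fun N hN => hN.elim (hUmax N) (fun h => h.1)⟩⟩,
      Submodule.FG.sup hI0fg (Submodule.fg_span_singleton c),
      Submodule.mem_sup_left hxI0, ?_, ?_, ?_, ?_⟩
    · intro htop
      have hle : I0 ⊔ Ideal.span {c} ≤ M :=
        sup_le hI0M ((Ideal.span_le).2 (by simpa using hcM))
      exact hMmax.ne_top (top_le_iff.1 (htop ▸ hle))
    · exact fun N hN => Set.mem_union_left _ hN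
    · rintro N ⟨hNmax, hNle⟩
      exact Set.mem_union_right _ ⟨hNmax, le_trans le_sup_left hNle⟩
    · intro N hN hle
      have hcN : c ∈ N := hle (Submodule.mem_sup_right (Ideal.mem_span_singleton_self c))
      exact hcU (Set.mem_biUnion (hUfin.mem_toFinset.2 hN) hcN)
  choose F hF1 hF2 hF3 hF4 hF5 hF6 using step
  set seq : ℕ → T := fun k => (fun t => (F t).2)^[k] ⟨∅, Set.finite_empty, fun N h => h.elim⟩
    with hseq
  have hseqsucc : ∀ k, seq (k + 1) = (F (seq k)).2 := by
    intro k
    simp only [hseq, Function.iterate_succ_apply']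
  have hmono : Monotone fun k => (seq k).1 := by
    apply monotone_nat_of_le_succ
    intro k
    rw [hseqsucc k]
    exact hF4 (seq k)
  refine ⟨fun k => (F (seq k)).1, fun k => hF1 _, fun k => hF2 _, fun k => hF3 _, ?_⟩
  have key : ∀ m k, m < k → (F (seq m)).1 ⊔ (F (seq k)).1 = ⊤ := by
    intro m k hmk
    by_contra hne
    obtain ⟨N, hNmax, hNle⟩ := Ideal.exists_le_maximal _ hne
    have hNm : N ∈ (seq (m + 1)).1 := by
      rw [hseqsucc m]
      exact hF5 (seq m) ⟨hNmax, le_trans le_sup_left hNle⟩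
    have hNk : N ∈ (seq k).1 := hmono hmk hNm
    exact hF6 (seq k) N hNk (le_trans le_sup_right hNle)
  intro m k hmk
  rcases lt_or_gt_of_ne hmk with h | h
  · exact key m k h
  · rw [sup_comm]; exact key k m h

/-- In any commutative ring, if `x ≠ 0` lies in infinitely many maximal ideals,
there is an infinite pairwise comaximal family of proper finitely generated
ideals all containing `x`. -/
theorem exists_comaximal_family (x : R)
    (hA : {M : Ideal R | M.IsMaximal ∧ x ∈ M}.Infinite) :
    ∃ I : ℕ → Ideal R, (∀ n, (I n).FG) ∧ (∀ n, x ∈ I n) ∧ (∀ n, I n ≠ ⊤) ∧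
      ∀ m n, m ≠ n → I m ⊔ I n = ⊤ := by
  by_cases h : ∃ M0 : Ideal R, M0.IsMaximal ∧ x ∈ M0 ∧ ∀ I : Ideal R, I.FG → x ∈ I → I ≤ M0 →
      {N : Ideal R | N.IsMaximal ∧ I ≤ N}.Infinite
  · obtain ⟨M0, hM0, hxM0, h1⟩ := h
    exact case_one_family x M0 hM0 hxM0 h1
  · push_neg at h
    refine case_two_family x hA (fun M hM hxM => ?_)
    obtain ⟨I, hIfg, hxI, hIM, hIinf⟩ := h M hM hxM
    exact ⟨I, hIfg, hxI, hIM, hIinf⟩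

end Construction


section Fractional

open scoped Pointwise

variable {R : Type*} [CommRing R] [IsDomain R]

/-- An invertible fractional ideal is spanned by a finite set. -/
theorem exists_finset_span_of_isUnit (J : FractionalIdeal (nonZeroDivisors R) (FractionRing R))
    (h : IsUnit J) :
    ∃ T : Finset (FractionRing R), (J : Submodule R (FractionRing R)) =
      Submodule.span R (T : Set (FractionRing R)) := by
  have hJ : J * J⁻¹ = 1 := (FractionalIdeal.mul_inv_cancel_iff_isUnit _).2 h
  have h1 : (1 : FractionRing R) ∈
      (J : Submodule R (FractionRing R)) *
        ((J⁻¹ : FractionalIdeal (nonZeroDivisors R) (FractionRing R)) :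
          Submodule R (FractionRing R)) := by
    rw [← FractionalIdeal.coe_mul, hJ]
    exact FractionalIdeal.mem_coe.2 (FractionalIdeal.one_mem_one _)
  obtain ⟨T, T', hT, hT', hspan⟩ := Submodule.mem_span_mul_finite_of_mem_mul h1
  refine ⟨T, le_antisymm ?_ (Submodule.span_le.2 hT)⟩
  intro y hy
  have h2 : y * 1 ∈ Submodule.span R ({y} : Set (FractionRing R)) *
      Submodule.span R ((T : Set (FractionRing R)) * (T' : Set (FractionRing R))) :=
    Submodule.mul_mem_mul (Submodule.mem_span_singleton_self y) hspan
  rw [Submodule.span_mul_span, mul_one] at h2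
  refine Submodule.span_le.2 ?_ h2
  rintro z ⟨yy, hyy, w, hw, rfl⟩
  obtain ⟨t, ht, t', ht', rfl⟩ := hw
  rw [Set.mem_singleton_iff] at hyy
  subst hyy
  have hyt' : yy * t' ∈ (1 : FractionalIdeal (nonZeroDivisors R) (FractionRing R)) := by
    rw [← hJ]
    exact FractionalIdeal.mul_mem_mul (FractionalIdeal.mem_coe.1 hy) (hT' ht')
  obtain ⟨r, hr⟩ := (FractionalIdeal.mem_one_iff _).1 hyt'
  have hz : yy * (t * t') = r • t := by
    rw [Algebra.smul_def, hr]; ring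
  show yy * (t * t') ∈ (Submodule.span R (T : Set (FractionRing R)) : Set (FractionRing R))
  rw [hz]
  exact SetLike.mem_coe.2 (Submodule.smul_mem _ r (Submodule.subset_span ht))

end Fractional

theorem countable_pseudoDedekind_prufer_finiteCharacter (R : Type*) [CommRing R]
    [IsDomain R] [Countable R] (hPD : IsPseudoDedekind R) (hPr : IsPruferDomain R) :
    FiniteCharacter R := by
  classical
  intro x hx
  by_contra hfin
  have hA : {M : Ideal R | M.IsMaximal ∧ x ∈ M}.Infinite := hfin
  obtain ⟨I, hIfg, hxI, hItop, hIcom⟩ := exists_comaximal_family x hA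
  set K := FractionRing R with hK
  haveI hKc : Countable K := by
    have hsurj : Function.Surjective
        (fun p : R × (nonZeroDivisors R) => IsLocalization.mk' K p.1 p.2) := by
      intro z
      obtain ⟨⟨x', y'⟩, h⟩ := IsLocalization.mk'_surjective (nonZeroDivisors R) z
      exact ⟨(x', y'), h⟩
    exact hsurj.countable
  have hIbot : ∀ n, I n ≠ ⊥ := by
    intro n h
    apply hx
    have := hxI n
    rw [h] at this
    simpa using this
  set c : ℕ → FractionalIdeal (nonZeroDivisors R) K :=
    fun n => (I n : FractionalIdeal (nonZeroDivisors R) K) with hc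
  have hIunit : ∀ n, IsUnit (c n) := fun n => hPr _ (hIfg n) (hIbot n)
  have hIcancel : ∀ n, c n * (c n)⁻¹ = 1 :=
    fun n => (FractionalIdeal.mul_inv_cancel_iff_isUnit K).2 (hIunit n)
  have hinv_ne : ∀ J : Ideal R, J ≠ ⊥ →
      (J : FractionalIdeal (nonZeroDivisors R) K)⁻¹ ≠ 0 := by
    intro J hJ h0
    have h1 : (1 : FractionalIdeal (nonZeroDivisors R) K) ≤
        (J : FractionalIdeal (nonZeroDivisors R) K)⁻¹ := by
      rw [FractionalIdeal.inv_eq,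
        FractionalIdeal.le_div_iff_mul_le (FractionalIdeal.coeIdeal_ne_zero.2 hJ), one_mul]
      exact FractionalIdeal.coeIdeal_le_one
    rw [h0, ← FractionalIdeal.bot_eq_zero, le_bot_iff] at h1
    exact one_ne_zero (h1.trans FractionalIdeal.bot_eq_zero)
  have hinvinv : ∀ n, (c n)⁻¹⁻¹ = c n := fun n =>
    (FractionalIdeal.right_inverse_eq K (c n)⁻¹ (c n)
      (by rw [mul_comm]; exact hIcancel n)).symm
  have hone_not_le : ∀ n, ¬ (1 : FractionalIdeal (nonZeroDivisors R) K) ≤ c n := by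
    intro n hle
    have h1 : c n = 1 := le_antisymm FractionalIdeal.coeIdeal_le_one hle
    exact hItop n (by simpa [Ideal.one_eq_top] using FractionalIdeal.coeIdeal_eq_one.1 h1)
  set CS : Set ℕ → Ideal R := fun S => ⨅ n ∈ S, I n with hCS
  have hxCS : ∀ S, x ∈ CS S := fun S =>
    (Submodule.mem_iInf _).2 fun n => (Submodule.mem_iInf _).2 fun _ => hxI n
  have hCSbot : ∀ S, CS S ≠ ⊥ := by
    intro S h
    apply hx
    have := hxCS S
    rw [h] at this
    simpa using this
  set V : Set ℕ → FractionalIdeal (nonZeroDivisors R) K :=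
    fun S => ((CS S : FractionalIdeal (nonZeroDivisors R) K))⁻¹⁻¹ with hV
  have hVunit : ∀ S, IsUnit (V S) := fun S => hPD (CS S) (hCSbot S)
  have hVcancel : ∀ S, V S * (V S)⁻¹ = 1 :=
    fun S => (FractionalIdeal.mul_inv_cancel_iff_isUnit K).2 (hVunit S)
  have hdir1 : ∀ S n, n ∈ S → V S ≤ c n := by
    intro S n hn
    have h1 : (CS S : FractionalIdeal (nonZeroDivisors R) K) ≤ c n :=
      (FractionalIdeal.coeIdeal_le_coeIdeal K).2 (iInf₂_le n hn)
    have h2 : (c n)⁻¹ ≤ (CS S : FractionalIdeal (nonZeroDivisors R) K)⁻¹ :=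
      FractionalIdeal.inv_anti_mono (FractionalIdeal.coeIdeal_ne_zero.2 (hCSbot S))
        (FractionalIdeal.coeIdeal_ne_zero.2 (hIbot n)) h1
    have h3 := FractionalIdeal.inv_anti_mono (hinv_ne _ (hIbot n)) (hinv_ne _ (hCSbot S)) h2
    rw [hinvinv n] at h3
    exact h3
  have hdir2 : ∀ S n, n ∉ S → ¬ V S ≤ c n := by
    intro S n hn hle
    rcases Set.eq_empty_or_nonempty S with rfl | ⟨m0, hm0⟩
    · have hCtop : CS (∅ : Set ℕ) = ⊤ := by simp [hCS]
      have hV1 : V (∅ : Set ℕ) = 1 := by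
        rw [hV]
        dsimp only
        rw [hCtop, FractionalIdeal.coeIdeal_top,
          ← FractionalIdeal.right_inverse_eq K 1 1 (one_mul 1),
          ← FractionalIdeal.right_inverse_eq K 1 1 (one_mul 1)]
      rw [hV1] at hle
      exact hone_not_le n hle
    · have hlem : ∀ m ∈ S, V S ≤ c m * c n := by
        intro m hm
        have h1 : V S ≤ c m := hdir1 S m hm
        have hinf : V S ≤ ((I m ⊓ I n : Ideal R) : FractionalIdeal (nonZeroDivisors R) K) := by
          intro y hy
          obtain ⟨a, ha, rfl⟩ := (FractionalIdeal.mem_coeIdeal _).1 (h1 hy)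
          obtain ⟨b, hb, hba⟩ := (FractionalIdeal.mem_coeIdeal _).1 (hle hy)
          have hab : b = a := IsFractionRing.injective R K hba
          exact (FractionalIdeal.mem_coeIdeal _).2 ⟨a, ⟨ha, hab ▸ hb⟩, rfl⟩
        calc V S ≤ ((I m ⊓ I n : Ideal R) : FractionalIdeal (nonZeroDivisors R) K) := hinf
          _ = ((I m * I n : Ideal R) : FractionalIdeal (nonZeroDivisors R) K) := by
              rw [Ideal.mul_eq_inf_of_coprime (hIcom m n (fun h => hn (h ▸ hm)))]
          _ = c m * c n := FractionalIdeal.coeIdeal_mul _ _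
      set L := V S * (c n)⁻¹ with hL
      have hLc : ∀ m ∈ S, L ≤ c m := by
        intro m hm
        calc L ≤ (c m * c n) * (c n)⁻¹ := mul_le_mul_left (hlem m hm) _
          _ = c m * (c n * (c n)⁻¹) := by rw [mul_assoc]
          _ = c m := by rw [hIcancel n, mul_one]
      have hLCS : L ≤ ((CS S : FractionalIdeal (nonZeroDivisors R) K)) := by
        intro y hy
        obtain ⟨a, ha, rfl⟩ := (FractionalIdeal.mem_coeIdeal _).1 (hLc m0 hm0 hy)
        refine (FractionalIdeal.mem_coeIdeal _).2 ⟨a, ?_, rfl⟩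
        refine (Submodule.mem_iInf _).2 fun m => (Submodule.mem_iInf _).2 fun hm => ?_
        obtain ⟨b, hb, hba⟩ := (FractionalIdeal.mem_coeIdeal _).1 (hLc m hm hy)
        exact (IsFractionRing.injective R K hba) ▸ hb
      have hLunit : IsUnit L := (hVunit S).mul
        (IsUnit.of_mul_eq_one _ (by rw [mul_comm]; exact hIcancel n))
      have hLcancel : L * L⁻¹ = 1 := (FractionalIdeal.mul_inv_cancel_iff_isUnit K).2 hLunit
      have hLne : L ≠ 0 := by
        intro h0
        rw [h0, zero_mul] at hLcancel
        exact zero_ne_one hLcancel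
      have hLinvne : L⁻¹ ≠ 0 := by
        intro h0
        rw [h0, mul_zero] at hLcancel
        exact zero_ne_one hLcancel
      have hLinvinv : L⁻¹⁻¹ = L :=
        (FractionalIdeal.right_inverse_eq K L⁻¹ L (by rw [mul_comm]; exact hLcancel)).symm
      have h4 : (CS S : FractionalIdeal (nonZeroDivisors R) K)⁻¹ ≤ L⁻¹ :=
        FractionalIdeal.inv_anti_mono hLne
          (FractionalIdeal.coeIdeal_ne_zero.2 (hCSbot S)) hLCS
      have h5 := FractionalIdeal.inv_anti_mono (hinv_ne _ (hCSbot S)) hLinvne h4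
      rw [hLinvinv] at h5
      have h6 : (c n)⁻¹ ≤ 1 := by
        calc (c n)⁻¹ = (V S)⁻¹ * L := by
              rw [hL, ← mul_assoc, mul_comm ((V S)⁻¹) (V S), hVcancel S, one_mul]
          _ ≤ (V S)⁻¹ * V S := mul_le_mul_right h5 _
          _ = 1 := by rw [mul_comm]; exact hVcancel S
      have h7 : (1 : FractionalIdeal (nonZeroDivisors R) K) ≤ c n := by
        calc (1 : FractionalIdeal (nonZeroDivisors R) K) = c n * (c n)⁻¹ := (hIcancel n).symm
          _ ≤ c n * 1 := mul_le_mul_right h6 _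
          _ = c n := mul_one _
      exact hone_not_le n h7
  have hVinj : Function.Injective V := by
    intro S S' hSS'
    ext n
    constructor
    · intro hn
      by_contra hn'
      exact hdir2 S' n hn' (hSS' ▸ hdir1 S n hn)
    · intro hn
      by_contra hn'
      exact hdir2 S n hn' (hSS'.symm ▸ hdir1 S' n hn)
  have hrep : ∀ S : Set ℕ, ∃ T : Finset K,
      ((V S : FractionalIdeal (nonZeroDivisors R) K) : Submodule R K) =
        Submodule.span R (T : Set K) :=
    fun S => exists_finset_span_of_isUnit _ (hVunit S)
  choose T hTspec using hrep
  have hTinj : Function.Injective T := by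
    intro S S' h
    have h2 : ((V S : FractionalIdeal (nonZeroDivisors R) K) : Submodule R K) =
        ((V S' : FractionalIdeal (nonZeroDivisors R) K) : Submodule R K) := by
      rw [hTspec S, hTspec S', h]
    exact hVinj (FractionalIdeal.coeToSubmodule_injective h2)
  haveI : Countable (Set ℕ) := hTinj.countable
  obtain ⟨f, hf⟩ := Countable.exists_injective_nat (Set ℕ)
  exact Function.cantor_injective f hf
end

section
/- Every countable sharp domain is a Dedekind domain. -/
set_option linter.unusedSectionVars false
open FractionalIdeal

/-- A domain `R` is *sharp* if whenever `I ⊇ A*B` with `I, A, B` nonzero ideals,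
there exist ideals `A' ⊇ A` and `B' ⊇ B` such that `I = A'*B'`. -/
def IsSharpDomain (R : Type*) [CommRing R] : Prop :=
  ∀ I A B : Ideal R, I ≠ ⊥ → A ≠ ⊥ → B ≠ ⊥ → A * B ≤ I →
    ∃ A' B' : Ideal R, A ≤ A' ∧ B ≤ B' ∧ I = A' * B'

namespace SharpAux

variable {R : Type*} [CommRing R] [IsDomain R]

local notation "FI" => FractionalIdeal (nonZeroDivisors R) (FractionRing R)

/-- cancel a unit in an inequality -/
theorem le_of_unit_mul_le {U V A B : FI} (h : U * V = 1) (hab : U * A ≤ U * B) : A ≤ B := by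
  calc A = V * (U * A) := by rw [← mul_assoc, mul_comm V U, h, one_mul]
    _ ≤ V * (U * B) := mul_right_mono (a := V) hab
    _ = B := by rw [← mul_assoc, mul_comm V U, h, one_mul]

theorem div_mul_le' {X Y : FI} (hY : Y ≠ 0) : (X / Y) * Y ≤ X :=
  (le_div_iff_mul_le hY).mp le_rfl

theorem le_add_right'' (X Y : FI) : X ≤ X + Y := by
  rw [← FractionalIdeal.coe_le_coe, FractionalIdeal.coe_add]
  exact le_sup_left

theorem inv_anti' {X Y : FI} (hX : X ≠ 0) (hle : X ≤ Y) : 1 / Y ≤ 1 / X := by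
  have hY : Y ≠ 0 := fun h => hX (le_antisymm (h ▸ hle) (zero_le X))
  refine (le_div_iff_mul_le hX).mpr ?_
  calc (1 / Y) * X ≤ (1 / Y) * Y := mul_right_mono (a := 1/Y) hle
    _ ≤ 1 := div_mul_le' hY

theorem one_le_inv' {X : FI} (hX : X ≠ 0) (h1 : X ≤ 1) : 1 ≤ 1 / X :=
  (le_div_iff_mul_le hX).mpr (by simpa using h1)

theorem inv_ne_zero' {X : FI} (hX : X ≠ 0) : 1 / X ≠ 0 := by
  intro h0
  have := FractionalIdeal.bot_lt_mul_inv (K := FractionRing R) hX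
  rw [inv_eq, h0, mul_zero] at this
  exact lt_irrefl _ this

theorem le_dv' {X : FI} (hX : X ≠ 0) : X ≤ 1 / (1 / X) := by
  refine (le_div_iff_mul_le (inv_ne_zero' hX)).mpr ?_
  rw [mul_comm]
  exact div_mul_le' hX

/-- for a unit, the double inverse is itself -/
theorem dv_of_unit {X Y : FI} (h : X * Y = 1) : 1 / (1 / X) = X := by
  have hY : Y = X⁻¹ := right_inverse_eq _ X Y h
  have h2 : (1 / X) * X = 1 := by
    rw [← inv_eq, mul_comm, ← hY]; exact h
  have h3 := right_inverse_eq _ (1 / X) X h2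
  rw [← inv_eq]; exact h3.symm

theorem unit_ne_zero' {X Y : FI} (h : X * Y = 1) : X ≠ 0 := by
  intro h0; rw [h0, zero_mul] at h; exact zero_ne_one h

/-- `U / X = U * (1/X)` when `U` is a unit. -/
theorem unit_div_eq {U V X : FI} (hUV : U * V = 1) (hX : X ≠ 0) : U / X = U * (1 / X) := by
  apply le_antisymm
  · have h1 : (U / X) * X ≤ U := div_mul_le' hX
    have h2 : V * ((U / X) * X) ≤ V * U := mul_right_mono (a := V) h1
    have h3 : (V * (U / X)) * X ≤ 1 := by
      rw [mul_assoc]; rw [mul_comm V U] at h2; rwa [hUV] at h2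
    have h4 : V * (U / X) ≤ 1 / X := (le_div_iff_mul_le hX).mpr h3
    calc U / X = U * (V * (U / X)) := by
          rw [← mul_assoc, hUV, one_mul]
      _ ≤ U * (1 / X) := mul_right_mono (a := U) h4
  · refine (le_div_iff_mul_le hX).mpr ?_
    calc U * (1 / X) * X = U * ((1 / X) * X) := by rw [mul_assoc]
      _ ≤ U * 1 := mul_right_mono (a := U) (div_mul_le' hX)
      _ = U := mul_one U

end SharpAux

section PD
variable {R : Type*} [CommRing R] [IsDomain R]
local notation "FI" => FractionalIdeal (nonZeroDivisors R) (FractionRing R)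
open SharpAux

/-- Pseudo–Dedekind property: for any nonzero integral ideal `I`,
the divisorial closure `1/(1/I)` is invertible, with inverse `1/I`. -/
theorem pseudoDedekind (hsh : IsSharpDomain R) {I : Ideal R} (hI : I ≠ ⊥) :
    (1 / (I : FI)) * (1 / (1 / (I : FI))) = 1 := by
  classical
  obtain ⟨a, haI, ha0⟩ : ∃ a ∈ I, a ≠ 0 := Submodule.exists_mem_ne_zero_of_ne_bot hI
  set K := FractionRing R
  have hφI : (I : FI) ≠ 0 := coeIdeal_ne_zero.mpr hI
  set α : FractionRing R := algebraMap R (FractionRing R) a with hα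
  have hα0 : α ≠ 0 := by
    simpa [hα] using (map_ne_zero_iff _ (IsFractionRing.injective R (FractionRing R))).mpr ha0
  set 𝔞 : FI := spanSingleton (nonZeroDivisors R) α with h𝔞
  have h𝔞0 : 𝔞 ≠ 0 := by
    simpa [h𝔞] using (spanSingleton_eq_zero_iff (y := α)).not.mpr hα0
  have h𝔞inv : 𝔞 * spanSingleton (nonZeroDivisors R) α⁻¹ = 1 := by
    rw [h𝔞, spanSingleton_mul_spanSingleton, mul_inv_cancel₀ hα0, spanSingleton_one]
  have hcoe𝔞 : ((Ideal.span {a} : Ideal R) : FI) = 𝔞 := coeIdeal_span_singleton a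
  have h𝔞leI : 𝔞 ≤ (I : FI) := by
    rw [← hcoe𝔞]
    exact (coeIdeal_le_coeIdeal _).mpr ((Ideal.span_singleton_le_iff_mem _).mpr haI)
  -- the quotient 𝔞 / I equals 𝔞 * (1/I) and is integral
  have hdiv : 𝔞 / (I : FI) = 𝔞 * (1 / (I : FI)) := unit_div_eq h𝔞inv hφI
  have hBle1 : 𝔞 / (I : FI) ≤ 1 := by
    rw [hdiv]
    calc 𝔞 * (1 / (I : FI)) ≤ (I : FI) * (1 / (I : FI)) := mul_left_mono (a := 1 / (I : FI)) h𝔞leI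
      _ = (1 / (I : FI)) * (I : FI) := mul_comm _ _
      _ ≤ 1 := div_mul_le' hφI
  obtain ⟨B, hB⟩ : ∃ B : Ideal R, (B : FI) = 𝔞 / (I : FI) := le_one_iff_exists_coeIdeal.mp hBle1
  have haB : a ∈ B := by
    have h1 : spanSingleton (nonZeroDivisors R) α ≤ 𝔞 / (I : FI) := by
      refine (le_div_iff_mul_le hφI).mpr ?_
      rw [← h𝔞, ← hcoe𝔞, ← coeIdeal_mul]
      exact (coeIdeal_le_coeIdeal _).mpr Ideal.mul_le_left
    rw [← hB] at h1
    have := spanSingleton_le_iff_mem.mp h1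
    obtain ⟨b, hbB, hba⟩ := (mem_coeIdeal _).mp this
    rwa [show b = a from IsFractionRing.injective R (FractionRing R) hba] at hbB
  have hBbot : B ≠ ⊥ := by
    intro h0; rw [h0] at haB; exact ha0 (by simpa using haB)
  have hIB : I * B ≤ Ideal.span {a} := by
    rw [← coeIdeal_le_coeIdeal (FractionRing R), coeIdeal_mul, hB, hcoe𝔞]
    calc (I : FI) * (𝔞 / (I : FI)) = (𝔞 / (I : FI)) * (I : FI) := mul_comm _ _
      _ ≤ 𝔞 := div_mul_le' hφI
  obtain ⟨A', B', hA', hB', heq⟩ :=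
    hsh (Ideal.span {a}) I B (by simpa using ha0) hI hBbot hIB
  have heqf : (A' : FI) * (B' : FI) = 𝔞 := by
    rw [← coeIdeal_mul, ← heq, hcoe𝔞]
  have hA'0 : (A' : FI) ≠ 0 := fun h => h𝔞0 (by rw [← heqf, h, zero_mul])
  have hφIA : (I : FI) ≤ (A' : FI) := (coeIdeal_le_coeIdeal _).mpr hA'
  -- squeeze B'
  have hB'le : (B' : FI) ≤ 𝔞 / (I : FI) := by
    have h1 : (B' : FI) ≤ 𝔞 / (A' : FI) :=
      (le_div_iff_mul_le hA'0).mpr (by rw [mul_comm]; exact heqf.le)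
    refine h1.trans ?_
    refine (le_div_iff_mul_le hφI).mpr ?_
    calc (𝔞 / (A' : FI)) * (I : FI) ≤ (𝔞 / (A' : FI)) * (A' : FI) :=
          mul_right_mono (a := _) hφIA
      _ ≤ 𝔞 := div_mul_le' hA'0
  have hB'ge : 𝔞 / (I : FI) ≤ (B' : FI) := by
    rw [← hB]; exact (coeIdeal_le_coeIdeal _).mpr hB'
  have hB'eq : (B' : FI) = 𝔞 * (1 / (I : FI)) := by
    rw [← hdiv]; exact le_antisymm hB'le hB'ge
  -- conclude A' * (1/I) = 1
  have hkey : (1 / (I : FI)) * (A' : FI) = 1 := by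
    have h1 : (A' : FI) * (𝔞 * (1 / (I : FI))) = 𝔞 := by rw [← hB'eq]; exact heqf
    have h2 : (A' : FI) * (1 / (I : FI)) * 𝔞 = 𝔞 := by
      rw [show (A' : FI) * (1 / (I : FI)) * 𝔞 = (A' : FI) * (𝔞 * (1 / (I : FI))) by ring, h1]
    have h3 : (A' : FI) * (1 / (I : FI)) *
        (𝔞 * spanSingleton (nonZeroDivisors R) α⁻¹) =
        𝔞 * spanSingleton (nonZeroDivisors R) α⁻¹ := by
      rw [← mul_assoc, h2]
    rw [h𝔞inv, mul_one] at h3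
    rw [mul_comm]; exact h3
  have hAinv := right_inverse_eq _ (1 / (I : FI)) (A' : FI) hkey
  have h4 : (1 / (I : FI))⁻¹ = (A' : FI) := hAinv.symm
  calc (1 / (I : FI)) * (1 / (1 / (I : FI))) = (1 / (I : FI)) * (1 / (I : FI))⁻¹ := by
        rw [inv_eq]
    _ = (1 / (I : FI)) * (A' : FI) := by rw [h4]
    _ = 1 := hkey

end PD

section TRICK
variable {R : Type*} [CommRing R] [IsDomain R]
local notation "FI" => FractionalIdeal (nonZeroDivisors R) (FractionRing R)
open SharpAux

theorem span_le_coeIdeal_iff {x : R} {W : Ideal R} :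
    spanSingleton (nonZeroDivisors R) (algebraMap R (FractionRing R) x) ≤ (W : FI) ↔ x ∈ W := by
  rw [spanSingleton_le_iff_mem, mem_coeIdeal]
  constructor
  · rintro ⟨w, hw, he⟩
    obtain rfl : w = x := IsFractionRing.injective R (FractionRing R) he
    exact hw
  · exact fun h => ⟨x, h, rfl⟩

/-- If `U`, `V` are invertible with `1/(U+V) = 1`, then `U ⊓ V = U * V`. -/
theorem inf_eq_mul_of_triv {U V Uv Vv : FI} (hU : U * Uv = 1) (hV : V * Vv = 1)
    (hU1 : U ≤ 1) (hV1 : V ≤ 1) (htriv : 1 / (U + V) = 1) : U ⊓ V = U * V := by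
  have hUV0 : U + V ≠ 0 := fun h =>
    unit_ne_zero' hU (le_antisymm ((le_add_right'' _ _).trans h.le) (zero_le U))
  apply le_antisymm
  · set Z := U ⊓ V with hZ
    have h1 : Z * (U + V) ≤ U * V := by
      rw [mul_add]
      refine sup_le ?_ ?_
      · calc Z * U ≤ V * U := mul_left_mono (a := U) inf_le_right
          _ = U * V := mul_comm _ _
      · exact mul_left_mono (a := V) inf_le_left
    have h2 : Z * (Uv * Vv) * (U + V) ≤ 1 := by
      have h2a := mul_left_mono (a := Uv * Vv) h1
      calc Z * (Uv * Vv) * (U + V) = Z * (U + V) * (Uv * Vv) := by ring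
        _ ≤ U * V * (Uv * Vv) := h2a
        _ = (U * Uv) * (V * Vv) := by ring
        _ = 1 := by rw [hU, hV, mul_one]
    have h3 : Z * (Uv * Vv) ≤ 1 / (U + V) := (le_div_iff_mul_le hUV0).mpr h2
    rw [htriv] at h3
    have h4 : Z * (Uv * Vv) * (U * V) ≤ 1 * (U * V) := mul_left_mono (a := U * V) h3
    calc Z = Z * ((Uv * Vv) * (U * V)) := by
          rw [show (Uv * Vv) * (U * V) = (U * Uv) * (V * Vv) by ring, hU, hV, mul_one, mul_one]
      _ = Z * (Uv * Vv) * (U * V) := by ring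
      _ ≤ 1 * (U * V) := h4
      _ = U * V := one_mul _
  · exact le_inf (calc U * V ≤ U * 1 := mul_right_mono (a := U) hV1
        _ = U := mul_one U)
      (calc U * V ≤ 1 * V := mul_left_mono (a := V) hU1
        _ = V := one_mul V)

/-- trivial inverse passes to `U + V*V`. -/
theorem triv_sq {U V : FI} (hU0 : U ≠ 0) (hU1 : U ≤ 1) (hV1 : V ≤ 1)
    (htriv : 1 / (U + V) = 1) : 1 / (U + V * V) = 1 := by
  have hUV0 : U + V ≠ 0 := fun h =>
    hU0 (le_antisymm ((le_add_right'' _ _).trans h.le) (zero_le U))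
  have hUVV0 : U + V * V ≠ 0 := fun h =>
    hU0 (le_antisymm ((le_add_right'' _ _).trans h.le) (zero_le U))
  have hsq : (U + V) * (U + V) ≤ U + V * V := by
    rw [add_mul, mul_add, mul_add]
    refine sup_le (sup_le ?_ ?_) (sup_le ?_ le_sup_right)
    · exact le_sup_of_le_left (calc U * U ≤ U * 1 := mul_right_mono (a := U) hU1
        _ = U := mul_one U)
    · exact le_sup_of_le_left (calc U * V ≤ U * 1 := mul_right_mono (a := U) hV1
        _ = U := mul_one U)
    · exact le_sup_of_le_left (calc V * U ≤ 1 * U := mul_left_mono (a := U) hV1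
        _ = U := one_mul U)
  apply le_antisymm
  · have h1 : (1 / (U + V * V)) * (U + V * V) ≤ 1 := div_mul_le' hUVV0
    have h2 : (1 / (U + V * V)) * ((U + V) * (U + V)) ≤ 1 :=
      le_trans (mul_right_mono (a := _) hsq) h1
    have h3 : (1 / (U + V * V)) * (U + V) ≤ 1 / (U + V) :=
      (le_div_iff_mul_le hUV0).mpr (by rwa [← mul_assoc] at h2)
    rw [htriv] at h3
    have h5 : (1 / (U + V * V)) ≤ 1 / (U + V) := (le_div_iff_mul_le hUV0).mpr h3
    rwa [htriv] at h5
  · refine one_le_inv' hUVV0 ?_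
    refine sup_le hU1 ?_
    calc V * V ≤ V * 1 := mul_right_mono (a := V) hV1
      _ = V := mul_one V
      _ ≤ 1 := hV1

/-- The key violation of sharpness: a sum of two nonzero invertible ideals with
trivial inverse must be the whole ring. -/
theorem two_gen_top (hsh : IsSharpDomain R) {U V : Ideal R} (hU : U ≠ ⊥) (hV : V ≠ ⊥)
    {Uv Vv : FI} (hUu : (U : FI) * Uv = 1) (hVu : (V : FI) * Vv = 1)
    (htriv : 1 / ((U : FI) + (V : FI)) = 1) : U ⊔ V = ⊤ := by
  by_contra hne
  set E : Ideal R := U ⊔ V with hE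
  have hEb : E ≠ ⊥ := fun h => hU (le_antisymm (le_sup_left.trans h.le) bot_le)
  have hcoeE : (E : FI) = (U : FI) + (V : FI) := coeIdeal_sup U V
  have hφE0 : (E : FI) ≠ 0 := coeIdeal_ne_zero.mpr hEb
  have hφU0 : (U : FI) ≠ 0 := coeIdeal_ne_zero.mpr hU
  have hVle1 : (V : FI) ≤ 1 := coeIdeal_le_one
  have hUle1 : (U : FI) ≤ 1 := coeIdeal_le_one
  have hinf : (U : FI) ⊓ (V : FI) = (U : FI) * (V : FI) :=
    inf_eq_mul_of_triv hUu hVu hUle1 hVle1 htriv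
  -- the container ideal
  set Iid : Ideal R := U ⊔ V * E with hIid
  have hIb : Iid ≠ ⊥ := fun h => hU (le_antisymm (le_sup_left.trans h.le) bot_le)
  have hEV : E * V ≤ Iid := by
    rw [hE, Ideal.sup_mul]
    refine sup_le (le_sup_of_le_left Ideal.mul_le_left) ?_
    exact le_sup_of_le_right (Ideal.mul_mono le_rfl le_sup_right)
  obtain ⟨A', B', hA', hB', heq⟩ := hsh Iid E V hIb hEb hV hEV
  have heqf : (A' : FI) * (B' : FI) = (Iid : FI) := by rw [← coeIdeal_mul, ← heq]
  have hcoeI : (Iid : FI) = (U : FI) + (V : FI) * (E : FI) := by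
    rw [hIid, coeIdeal_sup, coeIdeal_mul]
  -- key squeezing sublemma
  have sub1 : ∀ W : Ideal R, (W : FI) * (V : FI) ≤ (Iid : FI) → W ≤ E := by
    intro W hW x hxW
    have hx1 : spanSingleton (nonZeroDivisors R) (algebraMap R (FractionRing R) x) *
        (V : FI) ≤ (Iid : FI) :=
      le_trans (mul_left_mono (a := (V : FI)) (span_le_coeIdeal_iff.mpr hxW)) hW
    have hx2 : spanSingleton (nonZeroDivisors R) (algebraMap R (FractionRing R) x) ≤
        (U : FI) * Vv + (E : FI) := by
      have h2 : spanSingleton (nonZeroDivisors R) (algebraMap R (FractionRing R) x) *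
          (V : FI) * Vv ≤ ((U : FI) + (V : FI) * (E : FI)) * Vv := by
        refine mul_left_mono (a := Vv) ?_
        rwa [hcoeI] at hx1
      have h3 : ((U : FI) + (V : FI) * (E : FI)) * Vv =
          (U : FI) * Vv + (E : FI) := by
        rw [add_mul]
        congr 1
        rw [show (V : FI) * (E : FI) * Vv = (V : FI) * Vv * (E : FI) by ring, hVu, one_mul]
      rw [h3] at h2
      calc spanSingleton (nonZeroDivisors R) (algebraMap R (FractionRing R) x)
          = spanSingleton (nonZeroDivisors R) (algebraMap R (FractionRing R) x) *
            ((V : FI) * Vv) := by rw [hVu, mul_one]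
        _ = spanSingleton (nonZeroDivisors R) (algebraMap R (FractionRing R) x) *
            (V : FI) * Vv := by ring
        _ ≤ (U : FI) * Vv + (E : FI) := h2
    have hxmem : algebraMap R (FractionRing R) x ∈
        ((U : FI) * Vv + (E : FI) : FI) :=
      hx2 (mem_spanSingleton_self _ _)
    rw [← FractionalIdeal.mem_coe, FractionalIdeal.coe_add] at hxmem
    obtain ⟨y, hy, z, hz, hyz⟩ := Submodule.mem_sup.mp hxmem
    rw [FractionalIdeal.mem_coe] at hy hz
    obtain ⟨e, heE, he⟩ := (mem_coeIdeal _).mp hz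
    have hyeq : y = algebraMap R (FractionRing R) (x - e) := by
      rw [map_sub, he, ← hyz]; ring
    -- show x - e ∈ U
    have hsy : spanSingleton (nonZeroDivisors R) (algebraMap R (FractionRing R) (x - e)) ≤
        (U : FI) * Vv := by
      rw [← hyeq]; exact spanSingleton_le_iff_mem.mpr hy
    have hs1 : spanSingleton (nonZeroDivisors R) (algebraMap R (FractionRing R) (x - e)) ≤
        (1 : FI) := by
      exact spanSingleton_le_iff_mem.mpr (FractionalIdeal.coe_mem_one _ _)
    have hUv' : spanSingleton (nonZeroDivisors R) (algebraMap R (FractionRing R) (x - e)) *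
        (V : FI) ≤ (U : FI) * (V : FI) := by
      rw [← hinf]
      refine le_inf ?_ ?_
      · calc spanSingleton (nonZeroDivisors R) (algebraMap R (FractionRing R) (x - e)) *
            (V : FI) ≤ ((U : FI) * Vv) * (V : FI) := mul_left_mono (a := (V : FI)) hsy
          _ = (U : FI) * ((V : FI) * Vv) := by ring
          _ = (U : FI) := by rw [hVu, mul_one]
      · calc spanSingleton (nonZeroDivisors R) (algebraMap R (FractionRing R) (x - e)) *
            (V : FI) ≤ 1 * (V : FI) := mul_left_mono (a := (V : FI)) hs1
          _ = (V : FI) := one_mul _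
    have hspanU : spanSingleton (nonZeroDivisors R) (algebraMap R (FractionRing R) (x - e)) ≤
        (U : FI) := by
      have h5 := mul_left_mono (a := Vv) hUv'
      calc spanSingleton (nonZeroDivisors R) (algebraMap R (FractionRing R) (x - e))
          = spanSingleton (nonZeroDivisors R) (algebraMap R (FractionRing R) (x - e)) *
            ((V : FI) * Vv) := by rw [hVu, mul_one]
        _ = spanSingleton (nonZeroDivisors R) (algebraMap R (FractionRing R) (x - e)) *
            (V : FI) * Vv := by ring
        _ ≤ (U : FI) * (V : FI) * Vv := h5
        _ = (U : FI) * ((V : FI) * Vv) := by ring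
        _ = (U : FI) := by rw [hVu, mul_one]
    have hxe : x - e ∈ U := span_le_coeIdeal_iff.mp hspanU
    have hxx : x = (x - e) + e := by ring
    rw [hxx]
    have hUE0 : U ≤ E := le_sup_left
    exact E.add_mem (hUE0 hxe) heE
  -- apply to A' and B'
  have hA'E : A' = E := by
    refine le_antisymm (sub1 A' ?_) hA'
    calc (A' : FI) * (V : FI) ≤ (A' : FI) * (B' : FI) :=
          mul_right_mono (a := (A' : FI)) ((coeIdeal_le_coeIdeal _).mpr hB')
      _ = (Iid : FI) := heqf
  have hVA' : V ≤ A' := le_trans le_sup_right hA'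
  have hB'E : B' ≤ E := by
    refine sub1 B' ?_
    calc (B' : FI) * (V : FI) ≤ (B' : FI) * (A' : FI) :=
          mul_right_mono (a := (B' : FI)) ((coeIdeal_le_coeIdeal _).mpr hVA')
      _ = (A' : FI) * (B' : FI) := mul_comm _ _
      _ = (Iid : FI) := heqf
  have hIEE : Iid ≤ E * E := by
    rw [heq, hA'E]
    exact Ideal.mul_mono le_rfl hB'E
  have hUEE : U ≤ E * E := le_trans le_sup_left hIEE
  have hEE : E * E ≤ U * E ⊔ V * V := by
    have hUE' : U ≤ E := le_sup_left
    have hVE' : V ≤ E := le_sup_right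
    calc E * E = (U ⊔ V) * (U ⊔ V) := by rw [← hE]
      _ = U * (U ⊔ V) ⊔ V * (U ⊔ V) := Ideal.sup_mul U V (U ⊔ V)
      _ = (U * U ⊔ U * V) ⊔ (V * U ⊔ V * V) := by rw [Ideal.mul_sup, Ideal.mul_sup]
      _ ≤ U * E ⊔ V * V := by
          refine sup_le (sup_le ?_ ?_) (sup_le ?_ le_sup_right)
          · exact le_sup_of_le_left (Ideal.mul_mono le_rfl hUE')
          · exact le_sup_of_le_left (Ideal.mul_mono le_rfl hVE')
          · exact le_sup_of_le_left (by rw [mul_comm]; exact Ideal.mul_mono le_rfl hVE')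
  -- second trivial-inverse pair (U, V*V)
  have hVV0 : (V : FI) * (V : FI) ≠ 0 := fun h0 => by
    have : ((V : FI) * (V : FI)) * (Vv * Vv) = 1 := by
      rw [show ((V : FI) * (V : FI)) * (Vv * Vv) = ((V : FI) * Vv) * ((V : FI) * Vv) by ring,
        hVu, mul_one]
    rw [h0, zero_mul] at this
    exact zero_ne_one this
  have htriv2 : 1 / ((U : FI) + (V : FI) * (V : FI)) = 1 :=
    triv_sq hφU0 hUle1 hVle1 htriv
  have hinf2 : (U : FI) ⊓ ((V : FI) * (V : FI)) = (U : FI) * ((V : FI) * (V : FI)) := by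
    refine inf_eq_mul_of_triv hUu
      (show ((V : FI) * (V : FI)) * (Vv * Vv) = 1 by
        rw [show ((V : FI) * (V : FI)) * (Vv * Vv) = ((V : FI) * Vv) * ((V : FI) * Vv) by ring,
          hVu, mul_one]) hUle1 ?_ htriv2
    calc (V : FI) * (V : FI) ≤ (V : FI) * 1 := mul_right_mono (a := (V : FI)) hVle1
      _ = (V : FI) := mul_one _
      _ ≤ 1 := hVle1
  -- now: U ≤ U * E
  have hfin : U ≤ U * E := by
    intro x hxU
    have hx2 : x ∈ U * E ⊔ V * V := hEE (hUEE hxU)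
    obtain ⟨p, hp, s, hs, hps⟩ := Submodule.mem_sup.mp hx2
    have hsU : s ∈ U := by
      have hseq : s = x - p := by rw [← hps]; ring
      rw [hseq]; exact U.sub_mem hxU (Ideal.mul_le_left hp)
    have hsfr : spanSingleton (nonZeroDivisors R) (algebraMap R (FractionRing R) s) ≤
        (U : FI) * ((V : FI) * (V : FI)) := by
      rw [← hinf2]
      refine le_inf (span_le_coeIdeal_iff.mpr hsU) ?_
      rw [← coeIdeal_mul]
      exact span_le_coeIdeal_iff.mpr hs
    have hsUVV : s ∈ U * (V * V) := by
      rw [← coeIdeal_mul, ← coeIdeal_mul] at hsfr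
      exact span_le_coeIdeal_iff.mp hsfr
    have hsUE : s ∈ U * E := by
      refine Ideal.mul_mono le_rfl ?_ hsUVV
      exact le_trans Ideal.mul_le_left le_sup_right
    rw [← hps]
    exact (U * E).add_mem hp hsUE
  -- cancel U
  have hUE : (U : FI) ≤ (U : FI) * (E : FI) := by
    rw [← coeIdeal_mul]; exact (coeIdeal_le_coeIdeal _).mpr hfin
  have h1E : (1 : FI) ≤ (E : FI) := by
    calc (1 : FI) = Uv * (U : FI) := by rw [mul_comm]; exact hUu.symm
      _ ≤ Uv * ((U : FI) * (E : FI)) := mul_right_mono (a := Uv) hUE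
      _ = (Uv * (U : FI)) * (E : FI) := by ring
      _ = (E : FI) := by rw [mul_comm Uv, hUu, one_mul]
  refine hne ?_
  rw [eq_top_iff, ← coeIdeal_le_coeIdeal (FractionRing R), coeIdeal_top]
  exact h1E

end TRICK

section SUMS
variable {R : Type*} [CommRing R] [IsDomain R]
local notation "FI" => FractionalIdeal (nonZeroDivisors R) (FractionRing R)
open SharpAux

theorem fi_add_le {X Y Z : FI} (h1 : X ≤ Z) (h2 : Y ≤ Z) : X + Y ≤ Z := by
  rw [← FractionalIdeal.coe_le_coe, FractionalIdeal.coe_add]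
  exact sup_le (FractionalIdeal.coe_le_coe.mpr h1) (FractionalIdeal.coe_le_coe.mpr h2)

theorem fi_le_add_right (X Y : FI) : Y ≤ X + Y := by
  rw [← FractionalIdeal.coe_le_coe, FractionalIdeal.coe_add]
  exact le_sup_right

theorem fi_sum_le_one {ι : Type*} (s : Finset ι) (f : ι → FI) (h : ∀ i ∈ s, f i ≤ 1) :
    (∑ i ∈ s, f i) ≤ 1 := by
  classical
  induction s using Finset.induction_on with
  | empty => simpa using zero_le (1 : FI)
  | @insert _ _ hnot ih =>
      rw [Finset.sum_insert hnot]
      exact fi_add_le (h _ (Finset.mem_insert_self _ _))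
        (ih fun i hi => h i (Finset.mem_insert_of_mem hi))

theorem fi_le_sum {ι : Type*} (s : Finset ι) (f : ι → FI) {i : ι} (hi : i ∈ s) :
    f i ≤ ∑ j ∈ s, f j := by
  classical
  induction s using Finset.induction_on with
  | empty => cases hi
  | @insert a s hnot ih =>
      rw [Finset.sum_insert hnot]
      rcases Finset.mem_insert.mp hi with h | h
      · subst h; exact le_add_right'' _ _
      · exact (ih h).trans (fi_le_add_right _ _)

/-- Main induction: a sum of finitely many invertible integral fractional ideals with trivial
inverse equals `1`. -/
theorem fi_sum_triv_eq_one (hsh : IsSharpDomain R) :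
    ∀ (n : ℕ) (f : Fin n → FI), (∀ i, f i ≤ 1) → (∀ i, ∃ W : FI, f i * W = 1) →
      1 / (∑ i, f i) = 1 → (∑ i, f i) = 1 := by
  intro n
  induction n with
  | zero =>
      intro f _ _ htriv
      exfalso
      rw [show (∑ i : Fin 0, f i) = 0 from Finset.sum_empty, FractionalIdeal.div_zero] at htriv
      exact zero_ne_one htriv
  | succ n IH =>
      intro f hle hunit htriv
      have hsplit : (∑ i, f i) = (∑ i : Fin n, f i.castSucc) + f (Fin.last n) :=
        Fin.sum_univ_castSucc f
      set F : FI := ∑ i : Fin n, f i.castSucc with hF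
      set u : FI := f (Fin.last n) with hu
      obtain ⟨Wu, hWu⟩ := hunit (Fin.last n)
      have hu0 : u ≠ 0 := unit_ne_zero' hWu
      have hu1 : u ≤ 1 := hle _
      by_cases hF0 : F = 0
      · -- sum is just u
        have hSu : (∑ i, f i) = u := by rw [hsplit, hF0, zero_add]
        rw [hSu] at htriv ⊢
        have := dv_of_unit hWu
        rw [htriv, FractionalIdeal.div_one] at this
        rw [hu]
        exact this.symm
      · have hF1 : F ≤ 1 := fi_sum_le_one _ _ fun i _ => hle _
        set Wv : FI := 1 / F with hWv
        have hWv0 : Wv ≠ 0 := inv_ne_zero' hF0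
        obtain ⟨Fid, hFid⟩ : ∃ Fid : Ideal R, (Fid : FI) = F := le_one_iff_exists_coeIdeal.mp hF1
        have hFidb : Fid ≠ ⊥ := fun h => hF0 (by rw [← hFid, h, coeIdeal_bot])
        have hpd : Wv * (1 / Wv) = 1 := by
          have := pseudoDedekind hsh (R := R) hFidb
          rwa [hFid] at this
        set W : FI := 1 / Wv with hW
        have hFWv : F * Wv ≤ 1 := by
          rw [mul_comm]; exact div_mul_le' hF0
        have hFWv0 : F * Wv ≠ 0 := by
          intro h0
          apply hF0
          calc F = F * (Wv * W) := by rw [hpd, mul_one]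
            _ = (F * Wv) * W := by ring
            _ = 0 := by rw [h0, zero_mul]
        -- normalized family
        set f' : Fin n → FI := fun i => f i.castSucc * Wv with hf'
        have hf'le : ∀ i, f' i ≤ 1 := by
          intro i
          have hle' : f i.castSucc ≤ F := by
            rw [hF]
            exact fi_le_sum Finset.univ (fun j => f j.castSucc) (Finset.mem_univ i)
          calc f' i = f i.castSucc * Wv := rfl
            _ ≤ F * Wv := mul_left_mono (a := Wv) hle'
            _ ≤ 1 := hFWv
        have hf'unit : ∀ i, ∃ W' : FI, f' i * W' = 1 := by
          intro i
          obtain ⟨Wi, hWi⟩ := hunit i.castSucc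
          exact ⟨Wi * W, by
            calc f i.castSucc * Wv * (Wi * W) = (f i.castSucc * Wi) * (Wv * W) := by ring
              _ = 1 := by rw [hWi, hpd, mul_one]⟩
        have hsum' : (∑ i, f' i) = F * Wv := by
          rw [hF, Finset.sum_mul]
        have htriv' : 1 / (∑ i, f' i) = 1 := by
          rw [hsum']
          apply le_antisymm
          · have h1 : (1 / (F * Wv)) * (F * Wv) ≤ 1 := div_mul_le' hFWv0
            have h2 : (1 / (F * Wv)) * F ≤ W := by
              rw [hW]
              refine (le_div_iff_mul_le hWv0).mpr ?_
              rwa [← mul_assoc] at h1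
            have h3 : (Wv * (1 / (F * Wv))) * F ≤ 1 := by
              calc (Wv * (1 / (F * Wv))) * F = Wv * ((1 / (F * Wv)) * F) := by ring
                _ ≤ Wv * W := mul_right_mono (a := Wv) h2
                _ = 1 := hpd
            have h4 : Wv * (1 / (F * Wv)) ≤ Wv := by
              have := (le_div_iff_mul_le hF0).mpr h3
              rwa [← hWv] at this
            have h5 : W * (Wv * (1 / (F * Wv))) ≤ W * Wv := mul_right_mono (a := W) h4
            calc 1 / (F * Wv) = (W * Wv) * (1 / (F * Wv)) := by
                  rw [mul_comm W Wv, hpd, one_mul]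
              _ = W * (Wv * (1 / (F * Wv))) := by ring
              _ ≤ W * Wv := h5
              _ = 1 := by rw [mul_comm W Wv, hpd]
          · exact one_le_inv' hFWv0 hFWv
        have hIH := IH f' hf'le hf'unit htriv'
        rw [hsum'] at hIH
        -- F is invertible with inverse Wv
        have hFunit : F * Wv = 1 := hIH
        -- final application of the two-generator trick
        obtain ⟨uid, huid⟩ : ∃ uid : Ideal R, (uid : FI) = u := le_one_iff_exists_coeIdeal.mp hu1
        have huidb : uid ≠ ⊥ := fun h => hu0 (by rw [← huid, h, coeIdeal_bot])
        have htop : Fid ⊔ uid = ⊤ := by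
          refine two_gen_top hsh hFidb huidb (Uv := Wv) (Vv := Wu) ?_ ?_ ?_
          · rw [hFid]; exact hFunit
          · rw [huid]; exact hWu
          · rw [hFid, huid, ← hsplit]; exact htriv
        have := congrArg (fun J : Ideal R => (J : FI)) htop
        rw [coeIdeal_sup, hFid, huid, coeIdeal_top] at this
        rw [hsplit]
        exact this

end SUMS

section COUNT
open scoped Classical
variable {R : Type*} [CommRing R] [IsDomain R]
local notation "FI" => FractionalIdeal (nonZeroDivisors R) (FractionRing R)
open SharpAux

/-- gaps of a chain -/
noncomputable def gam (𝔇 𝔙 : ℕ → FI) (k : ℕ) : FI := 𝔇 k * 𝔙 (k + 1)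

/-- partial products over a subset -/
noncomputable def PP (𝔇 𝔙 : ℕ → FI) (S : Set ℕ) (m : ℕ) : FI :=
  ∏ i ∈ (Finset.range m).filter (· ∈ S), gam 𝔇 𝔙 i

theorem fi_prod_le_one {s : Finset ℕ} {f : ℕ → FI} (h : ∀ i, f i ≤ 1) :
    (∏ i ∈ s, f i) ≤ 1 := by
  induction s using Finset.induction_on with
  | empty => simp
  | @insert a s hnot ih =>
      rw [Finset.prod_insert hnot]
      calc f a * ∏ i ∈ s, f i ≤ 1 * 1 := by
            refine le_trans (mul_left_mono (a := _) (h a)) ?_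
            exact mul_right_mono (a := 1) ih
        _ = 1 := one_mul 1

theorem fi_prod_anti {s t : Finset ℕ} {f : ℕ → FI} (hst : s ⊆ t) (h : ∀ i, f i ≤ 1) :
    (∏ i ∈ t, f i) ≤ ∏ i ∈ s, f i := by
  rw [← Finset.prod_sdiff hst]
  calc (∏ i ∈ t \ s, f i) * ∏ i ∈ s, f i ≤ 1 * ∏ i ∈ s, f i :=
        mul_left_mono (a := _) (fi_prod_le_one h)
    _ = ∏ i ∈ s, f i := one_mul _

/-- The abstract counting argument: in a countable sharp domain there is no
increasing chain of invertible integral ideals with escaping squares. -/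
theorem counting [Countable R] (hsh : IsSharpDomain R) (𝔇 𝔙 : ℕ → FI)
    (hunit : ∀ k, 𝔙 k * 𝔇 k = 1) (hD1 : ∀ k, 𝔇 k ≤ 1)
    (hmono : ∀ k, 𝔇 k ≤ 𝔇 (k + 1))
    (hesc : ∀ k, ¬(𝔇 (k + 1) * 𝔇 (k + 1) ≤ 𝔇 k)) : False := by
  -- basic facts
  have hD0 : ∀ k, 𝔇 k ≠ 0 := fun k h0 => by
    have := hunit k; rw [h0, mul_zero] at this; exact zero_ne_one this
  have hV0 : ∀ k, 𝔙 k ≠ 0 := fun k h0 => by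
    have := hunit k; rw [h0, zero_mul] at this; exact zero_ne_one this
  have hV1 : ∀ k, 1 ≤ 𝔙 k := by
    intro k
    calc (1 : FI) = 𝔙 k * 𝔇 k := (hunit k).symm
      _ ≤ 𝔙 k * 1 := mul_right_mono (a := _) (hD1 k)
      _ = 𝔙 k := mul_one _
  have hg1 : ∀ k, gam 𝔇 𝔙 k ≤ 1 := by
    intro k
    calc gam 𝔇 𝔙 k = 𝔇 k * 𝔙 (k + 1) := rfl
      _ ≤ 𝔇 (k + 1) * 𝔙 (k + 1) := mul_left_mono (a := _) (hmono k)
      _ = 1 := by rw [mul_comm]; exact hunit (k + 1)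
  have hgunit : ∀ k, gam 𝔇 𝔙 k * (𝔙 k * 𝔇 (k + 1)) = 1 := by
    intro k
    calc gam 𝔇 𝔙 k * (𝔙 k * 𝔇 (k + 1))
        = (𝔙 k * 𝔇 k) * (𝔙 (k + 1) * 𝔇 (k + 1)) := by rw [gam]; ring
      _ = 1 := by rw [hunit, hunit, mul_one]
  -- telescoping
  have tel : ∀ k m, k ≤ m → (∏ i ∈ Finset.Ico k m, gam 𝔇 𝔙 i) = 𝔇 k * 𝔙 m := by
    intro k m hkm
    induction m, hkm using Nat.le_induction with
    | base => rw [Finset.Ico_self, Finset.prod_empty, mul_comm]; exact (hunit k).symm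
    | succ m hkm ih =>
        rw [Finset.prod_Ico_succ_top hkm, ih]
        calc 𝔇 k * 𝔙 m * gam 𝔇 𝔙 m = 𝔇 k * 𝔙 (m + 1) * (𝔙 m * 𝔇 m) := by rw [gam]; ring
          _ = 𝔇 k * 𝔙 (m + 1) := by rw [hunit, mul_one]
  -- partial products: units
  have hPunit : ∀ (S : Set ℕ) m, PP 𝔇 𝔙 S m *
      (∏ i ∈ (Finset.range m).filter (· ∈ S), (𝔙 i * 𝔇 (i + 1))) = 1 := by
    intro S m
    rw [PP, ← Finset.prod_mul_distrib]
    rw [Finset.prod_congr rfl fun i _ => hgunit i]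
    exact Finset.prod_const_one
  have hP1 : ∀ (S : Set ℕ) m, PP 𝔇 𝔙 S m ≤ 1 := fun S m => fi_prod_le_one hg1
  have hP0 : ∀ (S : Set ℕ) m, PP 𝔇 𝔙 S m ≠ 0 := fun S m h0 => by
    have := hPunit S m; rw [h0, zero_mul] at this; exact zero_ne_one this
  have hPzero : ∀ S : Set ℕ, PP 𝔇 𝔙 S 0 = 1 := by
    intro S; rw [PP, Finset.range_zero, Finset.filter_empty, Finset.prod_empty]
  -- lower bound by 𝔇 0
  have hPlow : ∀ (S : Set ℕ) m, 𝔇 0 ≤ PP 𝔇 𝔙 S m := by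
    intro S m
    have h1 : (∏ i ∈ Finset.range m, gam 𝔇 𝔙 i) ≤ PP 𝔇 𝔙 S m :=
      fi_prod_anti (Finset.filter_subset _ _) hg1
    have h2 : (∏ i ∈ Finset.range m, gam 𝔇 𝔙 i) = 𝔇 0 * 𝔙 m := by
      rw [Finset.range_eq_Ico]; exact tel 0 m (Nat.zero_le m)
    calc 𝔇 0 = 𝔇 0 * 1 := (mul_one _).symm
      _ ≤ 𝔇 0 * 𝔙 m := mul_right_mono (a := _) (hV1 m)
      _ = ∏ i ∈ Finset.range m, gam 𝔇 𝔙 i := h2.symm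
      _ ≤ PP 𝔇 𝔙 S m := h1
  -- the submodule-valued map
  set 𝒳 : Set ℕ → Submodule R (FractionRing R) :=
    fun S => ⨅ m, (PP 𝔇 𝔙 S m : Submodule R (FractionRing R)) with h𝒳
  have h𝒳frac : ∀ S, IsFractional (nonZeroDivisors R) (𝒳 S) := by
    intro S
    refine isFractional_of_le (J := 1) ?_
    refine le_trans (iInf_le _ 0) ?_
    rw [hPzero S]
  -- as a fractional ideal
  set 𝔛 : Set ℕ → FI := fun S => ⟨𝒳 S, h𝒳frac S⟩ with h𝔛
  have h𝔛coe : ∀ S, (𝔛 S : Submodule R (FractionRing R)) = 𝒳 S := fun S => rfl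
  have h𝔛leP : ∀ S m, 𝔛 S ≤ PP 𝔇 𝔙 S m := by
    intro S m
    rw [← FractionalIdeal.coe_le_coe, h𝔛coe]
    exact iInf_le _ m
  have h𝔛ge : ∀ (S : Set ℕ) (Y : FI), (∀ m, Y ≤ PP 𝔇 𝔙 S m) → Y ≤ 𝔛 S := by
    intro S Y hY
    rw [← FractionalIdeal.coe_le_coe, h𝔛coe]
    exact le_iInf fun m => FractionalIdeal.coe_le_coe.mpr (hY m)
  have h𝔛0 : ∀ S, 𝔛 S ≠ 0 := by
    intro S h0
    have h1 : 𝔇 0 ≤ 𝔛 S := h𝔛ge S (𝔇 0) (fun m => hPlow S m)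
    rw [h0] at h1
    exact hD0 0 (le_antisymm h1 (zero_le _))
  have h𝔛1 : ∀ S, 𝔛 S ≤ 1 := fun S => (h𝔛leP S 0).trans_eq (hPzero S)
  -- divisoriality
  have h𝔛dv : ∀ S, 1 / (1 / 𝔛 S) = 𝔛 S := by
    intro S
    apply le_antisymm
    · refine h𝔛ge S _ ?_
      intro m
      have h1 : 1 / PP 𝔇 𝔙 S m ≤ 1 / 𝔛 S := inv_anti' (h𝔛0 S) (h𝔛leP S m)
      have h2 : 1 / (1 / 𝔛 S) ≤ 1 / (1 / PP 𝔇 𝔙 S m) :=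
        inv_anti' (inv_ne_zero' (hP0 S m)) h1
      rwa [dv_of_unit (hPunit S m)] at h2
    · exact le_dv' (h𝔛0 S)
  -- invertibility (hence finite generation)
  have h𝔛unit : ∀ S, 𝔛 S * (1 / 𝔛 S) = 1 := by
    intro S
    obtain ⟨Xid, hXid⟩ := le_one_iff_exists_coeIdeal.mp (h𝔛1 S)
    have hXb : Xid ≠ ⊥ := fun h => h𝔛0 S (by rw [← hXid, h, coeIdeal_bot])
    have := pseudoDedekind hsh (R := R) hXb
    rw [hXid, h𝔛dv S] at this
    rw [mul_comm]; exact this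
  have h𝔛fg : ∀ S, (𝒳 S).FG := by
    intro S
    have hu : IsUnit (𝔛 S) := IsUnit.of_mul_eq_one _ (h𝔛unit S)
    have := FractionalIdeal.fg_unit hu.unit
    rwa [hu.unit_spec, h𝔛coe] at this
  -- injectivity auxiliary
  have inj_aux : ∀ (S S' : Set ℕ) (k : ℕ), k ∈ S → k ∉ S' →
      (∀ n, n < k → (n ∈ S ↔ n ∈ S')) → 𝒳 S = 𝒳 S' → False := by
    intro S S' k hkS hkS' hpre hXX
    have hfil : (Finset.range k).filter (· ∈ S') = (Finset.range k).filter (· ∈ S) := by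
      refine Finset.filter_congr ?_
      intro n hn
      simpa using (hpre n (Finset.mem_range.mp hn)).symm
    -- upper bound for 𝔛 S
    have hup : 𝔛 S ≤ PP 𝔇 𝔙 S k * gam 𝔇 𝔙 k := by
      refine (h𝔛leP S (k + 1)).trans_eq ?_
      rw [PP, PP, Finset.range_add_one, Finset.filter_insert, if_pos hkS,
        Finset.prod_insert (fun hmem => Nat.lt_irrefl k
          (Finset.mem_range.mp (Finset.mem_of_mem_filter k hmem)))]
      rw [mul_comm]
    -- lower bound for 𝔛 S'
    have hlowcore : ∀ m, k + 1 ≤ m → PP 𝔇 𝔙 S k * 𝔇 (k + 1) ≤ PP 𝔇 𝔙 S' m := by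
      intro m hkm
      have hsplit : (Finset.range m).filter (· ∈ S') =
          ((Finset.range k).filter (· ∈ S')) ∪ ((Finset.Ico k m).filter (· ∈ S')) := by
        rw [Finset.range_eq_Ico, Finset.range_eq_Ico, ← Finset.filter_union,
          Finset.Ico_union_Ico_eq_Ico (Nat.zero_le k) (Nat.le_of_succ_le hkm)]
      have hdisj : Disjoint ((Finset.range k).filter (· ∈ S'))
          ((Finset.Ico k m).filter (· ∈ S')) := by
        refine Finset.disjoint_filter_filter ?_
        rw [Finset.range_eq_Ico]
        exact Finset.Ico_disjoint_Ico_consecutive 0 k m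
      have hPm : PP 𝔇 𝔙 S' m =
          PP 𝔇 𝔙 S' k * ∏ i ∈ (Finset.Ico k m).filter (· ∈ S'), gam 𝔇 𝔙 i := by
        rw [PP, hsplit, Finset.prod_union hdisj, PP]
      have htail_sub : (Finset.Ico k m).filter (· ∈ S') ⊆ Finset.Ico (k + 1) m := by
        intro n hn
        rw [Finset.mem_filter, Finset.mem_Ico] at hn
        rw [Finset.mem_Ico]
        refine ⟨?_, hn.1.2⟩
        rcases Nat.lt_or_ge n (k + 1) with h | h
        · exfalso
          have : n = k := Nat.le_antisymm (Nat.lt_succ_iff.mp h) hn.1.1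
          rw [this] at hn
          exact hkS' hn.2
        · exact h
      have htail : 𝔇 (k + 1) * 𝔙 m ≤ ∏ i ∈ (Finset.Ico k m).filter (· ∈ S'), gam 𝔇 𝔙 i := by
        rw [← tel (k + 1) m hkm]
        exact fi_prod_anti htail_sub hg1
      calc PP 𝔇 𝔙 S k * 𝔇 (k + 1) = PP 𝔇 𝔙 S k * (𝔇 (k + 1) * 1) := by rw [mul_one]
        _ ≤ PP 𝔇 𝔙 S k * (𝔇 (k + 1) * 𝔙 m) :=
            mul_right_mono (a := _) (mul_right_mono (a := _) (hV1 m))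
        _ ≤ PP 𝔇 𝔙 S k * ∏ i ∈ (Finset.Ico k m).filter (· ∈ S'), gam 𝔇 𝔙 i :=
            mul_right_mono (a := _) htail
        _ = PP 𝔇 𝔙 S' k * ∏ i ∈ (Finset.Ico k m).filter (· ∈ S'), gam 𝔇 𝔙 i := by
            rw [PP, PP, hfil]
        _ = PP 𝔇 𝔙 S' m := hPm.symm
    have hlow : PP 𝔇 𝔙 S k * 𝔇 (k + 1) ≤ 𝔛 S' := by
      refine h𝔛ge S' _ ?_
      intro m
      rcases le_or_gt (k + 1) m with h | h
      · exact hlowcore m h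
      · refine le_trans (hlowcore (k + 1) le_rfl) ?_
        refine fi_prod_anti ?_ hg1
        exact Finset.filter_subset_filter _ (Finset.range_subset_range.mpr (Nat.le_of_lt h))
    -- combine
    have hcomb : PP 𝔇 𝔙 S k * 𝔇 (k + 1) ≤ PP 𝔇 𝔙 S k * gam 𝔇 𝔙 k := by
      refine le_trans hlow ?_
      have : 𝔛 S' = 𝔛 S := by
        rw [← FractionalIdeal.coeToSubmodule_inj, h𝔛coe, h𝔛coe]
        exact hXX.symm
      rw [this]
      exact hup
    have hDle : 𝔇 (k + 1) ≤ gam 𝔇 𝔙 k :=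
      le_of_unit_mul_le (hPunit S k) hcomb
    refine hesc k ?_
    calc 𝔇 (k + 1) * 𝔇 (k + 1) ≤ gam 𝔇 𝔙 k * 𝔇 (k + 1) := mul_left_mono (a := _) hDle
      _ = 𝔇 k * (𝔙 (k + 1) * 𝔇 (k + 1)) := by rw [gam]; ring
      _ = 𝔇 k := by rw [hunit, mul_one]
  -- injectivity
  have hinj : Function.Injective 𝒳 := by
    intro S S' hXX
    by_contra hne
    have hex : ∃ n, ¬(n ∈ S ↔ n ∈ S') := by
      by_contra hall
      push_neg at hall
      exact hne (Set.ext fun n => hall n)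
    set k := Nat.find hex with hk
    have hkspec : ¬(k ∈ S ↔ k ∈ S') := Nat.find_spec hex
    have hpre : ∀ n, n < k → (n ∈ S ↔ n ∈ S') := fun n hn =>
      of_not_not (Nat.find_min hex hn)
    by_cases hkS : k ∈ S
    · have hkS' : k ∉ S' := fun h => hkspec ⟨fun _ => h, fun _ => hkS⟩
      exact inj_aux S S' k hkS hkS' hpre hXX
    · have hkS' : k ∈ S' := by
        by_contra h
        exact hkspec ⟨fun h' => absurd h' hkS, fun h' => absurd h' h⟩
      exact inj_aux S' S k hkS' hkS (fun n hn => (hpre n hn).symm) hXX.symm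
  -- countability contradiction
  have hKcount : Countable (FractionRing R) := by
    have hsurj : Function.Surjective (fun p : R × (nonZeroDivisors R) =>
        algebraMap R (FractionRing R) p.1 * (algebraMap R (FractionRing R) (p.2 : R))⁻¹) := by
      intro z
      obtain ⟨⟨r, s⟩, hrs⟩ := IsLocalization.surj (nonZeroDivisors R) z
      refine ⟨(r, s), ?_⟩
      have hs0 : algebraMap R (FractionRing R) (s : R) ≠ 0 :=
        IsFractionRing.to_map_ne_zero_of_mem_nonZeroDivisors s.2
      field_simp
      exact hrs.symm.trans (mul_comm _ _)
    exact hsurj.countable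
  have hScount : Countable {p : Submodule R (FractionRing R) // p.FG} := by
    have hsurj : Function.Surjective (fun s : Finset (FractionRing R) =>
        (⟨Submodule.span R ↑s, ⟨s, rfl⟩⟩ : {p : Submodule R (FractionRing R) // p.FG})) := by
      rintro ⟨p, s, hs⟩
      exact ⟨s, Subtype.ext hs⟩
    exact hsurj.countable
  have : Countable (Set ℕ) := by
    have hinj2 : Function.Injective (fun S : Set ℕ =>
        (⟨𝒳 S, h𝔛fg S⟩ : {p : Submodule R (FractionRing R) // p.FG})) := by
      intro S S' h
      exact hinj (congrArg Subtype.val h)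
    exact hinj2.countable
  obtain ⟨f, hf⟩ := countable_iff_exists_injective (Set ℕ) |>.mp this
  exact Function.cantor_injective f hf

end COUNT

section NOTRIV
open scoped Classical
variable {R : Type*} [CommRing R] [IsDomain R]
local notation "FI" => FractionalIdeal (nonZeroDivisors R) (FractionRing R)
open SharpAux

theorem id_le_add_left (X Y : Ideal R) : X ≤ X + Y := by
  rw [Submodule.add_eq_sup]; exact le_sup_left

theorem id_le_sum {s : Finset ℕ} {f : ℕ → Ideal R} {i : ℕ} (hi : i ∈ s) :
    f i ≤ ∑ j ∈ s, f j := by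
  induction s using Finset.induction_on with
  | empty => cases hi
  | @insert a s hnot ih =>
      rw [Finset.sum_insert hnot]
      rcases Finset.mem_insert.mp hi with h | h
      · subst h; exact id_le_add_left _ _
      · refine (ih h).trans ?_
        rw [Submodule.add_eq_sup]; exact le_sup_right

theorem id_sum_le {s : Finset ℕ} {f : ℕ → Ideal R} {J : Ideal R} (h : ∀ i ∈ s, f i ≤ J) :
    (∑ i ∈ s, f i) ≤ J := by
  induction s using Finset.induction_on with
  | empty => simpa using bot_le
  | @insert a s hnot ih =>
      rw [Finset.sum_insert hnot, Submodule.add_eq_sup]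
      exact sup_le (h a (Finset.mem_insert_self _ _))
        (ih fun i hi => h i (Finset.mem_insert_of_mem hi))

theorem id_coe_sum (s : Finset ℕ) (f : ℕ → Ideal R) :
    (((∑ i ∈ s, f i : Ideal R)) : FI) = ∑ i ∈ s, ((f i : Ideal R) : FI) := by
  induction s using Finset.induction_on with
  | empty =>
      rw [Finset.sum_empty, Finset.sum_empty]
      exact coeIdeal_bot
  | @insert a s hnot ih =>
      rw [Finset.sum_insert hnot, Finset.sum_insert hnot, Submodule.add_eq_sup,
        coeIdeal_sup, ih]

theorem fi_sq_mono {X Y : FI} (h : X ≤ Y) : X * X ≤ Y * Y :=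
  le_trans (mul_right_mono (a := X) h) (mul_left_mono (a := Y) h)

noncomputable def Fchain (g : ℕ → R) (n : ℕ) : Ideal R :=
  ∑ i ∈ Finset.range (n + 1), Ideal.span {g i}

theorem Fchain_def (g : ℕ → R) (n : ℕ) :
    Fchain (R := R) g n = ∑ i ∈ Finset.range (n + 1), Ideal.span {g i} := rfl

/-- In a countable sharp domain there is no proper nonzero ideal with trivial inverse. -/
theorem no_trivial [Countable R] (hsh : IsSharpDomain R) {J : Ideal R} (hJb : J ≠ ⊥)
    (hJt : J ≠ ⊤) (htriv : 1 / (J : FI) = 1) : False := by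
  have hφJ0 : (J : FI) ≠ 0 := coeIdeal_ne_zero.mpr hJb
  obtain ⟨a0, ha0J, ha00⟩ := Submodule.exists_mem_ne_zero_of_ne_bot hJb
  have hTne : Nonempty {x : R // x ∈ J ∧ x ≠ 0} := ⟨⟨a0, ha0J, ha00⟩⟩
  obtain ⟨e, he⟩ := exists_surjective_nat {x : R // x ∈ J ∧ x ≠ 0}
  set Fid : ℕ → Ideal R := Fchain (fun i => ((e i) : R)) with hFiddef
  have hFle : ∀ n, Fid n ≤ J := by
    intro n
    rw [hFiddef, Fchain_def (fun i => ((e i) : R))]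
    exact id_sum_le (fun i _ => by
      rw [Ideal.span_singleton_le_iff_mem]; exact (e i).2.1)
  have hFb : ∀ n, Fid n ≠ ⊥ := by
    intro n h0
    have h1 : Ideal.span {((e 0) : R)} ≤ Fid n := by
      rw [hFiddef, Fchain_def (fun i => ((e i) : R))]
      exact id_le_sum (f := fun i => Ideal.span {((e i) : R)}) (Finset.mem_range.mpr (Nat.succ_pos n))
    rw [h0, le_bot_iff, Ideal.span_singleton_eq_bot] at h1
    exact (e 0).2.2 h1
  have hφF0 : ∀ n, ((Fid n : Ideal R) : FI) ≠ 0 := fun n => coeIdeal_ne_zero.mpr (hFb n)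
  have hFmono : ∀ n m, n ≤ m → Fid n ≤ Fid m := by
    intro n m h
    rw [hFiddef, Fchain_def (fun i => ((e i) : R)), Fchain_def (fun i => ((e i) : R))]
    exact id_sum_le (fun i hi => id_le_sum (f := fun i => Ideal.span {((e i) : R)})
      (Finset.mem_range.mpr (lt_of_lt_of_le (Finset.mem_range.mp hi) (Nat.succ_le_succ h))))
  have hmemF : ∀ n, ((e n) : R) ∈ Fid n := by
    intro n
    have h1 : Ideal.span {((e n) : R)} ≤ Fid n := by
      rw [hFiddef, Fchain_def (fun i => ((e i) : R))]
      exact id_le_sum (f := fun i => Ideal.span {((e i) : R)}) (Finset.mem_range.mpr (Nat.lt_succ_self n))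
    exact h1 (Ideal.mem_span_singleton_self _)
  -- no F n has trivial inverse
  have hFnotriv : ∀ n, 1 / ((Fid n : Ideal R) : FI) ≠ 1 := by
    intro n htr
    have hcoe : ((Fid n : Ideal R) : FI) =
        ∑ i : Fin (n + 1), ((Ideal.span {((e (i : ℕ)) : R)} : Ideal R) : FI) := by
      rw [hFiddef, Fchain_def (fun i => ((e i) : R)), id_coe_sum, Fin.sum_univ_eq_sum_range
        (fun i => ((Ideal.span {((e i) : R)} : Ideal R) : FI)) (n + 1)]
    have hx0 : ∀ i : ℕ, ((e i) : R) ≠ 0 := fun i => (e i).2.2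
    have hEq := fi_sum_triv_eq_one hsh (n + 1)
      (fun i : Fin (n + 1) => ((Ideal.span {((e (i : ℕ)) : R)} : Ideal R) : FI))
      (fun i => coeIdeal_le_one)
      (fun i => ⟨((Ideal.span {((e (i : ℕ)) : R)} : Ideal R) : FI)⁻¹,
        coe_ideal_span_singleton_mul_inv (FractionRing R) (hx0 i)⟩)
      (by rw [← hcoe]; exact htr)
    rw [← hcoe] at hEq
    have hFtop : Fid n = ⊤ := by
      rw [← coeIdeal_inj (K := FractionRing R), coeIdeal_top]
      exact hEq
    exact hJt (top_le_iff.mp (hFtop ▸ hFle n))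
  -- chain data
  have hDW : ∀ n, (1 / ((Fid n : Ideal R) : FI)) * (1 / (1 / ((Fid n : Ideal R) : FI))) = 1 :=
    fun n => pseudoDedekind hsh (hFb n)
  have hWv0 : ∀ n, (1 / ((Fid n : Ideal R) : FI)) ≠ 0 := fun n => inv_ne_zero' (hφF0 n)
  have hWv1 : ∀ n, (1 : FI) ≤ 1 / ((Fid n : Ideal R) : FI) :=
    fun n => one_le_inv' (hφF0 n) coeIdeal_le_one
  have hD1 : ∀ n, (1 / (1 / ((Fid n : Ideal R) : FI))) ≤ 1 := by
    intro n
    have := inv_anti' (X := (1 : FI)) one_ne_zero (hWv1 n)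
    rwa [FractionalIdeal.div_one] at this
  have hφleD : ∀ n, ((Fid n : Ideal R) : FI) ≤ 1 / (1 / ((Fid n : Ideal R) : FI)) :=
    fun n => le_dv' (hφF0 n)
  have hDmono : ∀ n m, n ≤ m →
      (1 / (1 / ((Fid n : Ideal R) : FI))) ≤ 1 / (1 / ((Fid m : Ideal R) : FI)) := by
    intro n m h
    have h1 : (1 / ((Fid m : Ideal R) : FI)) ≤ 1 / ((Fid n : Ideal R) : FI) :=
      inv_anti' (hφF0 n) ((coeIdeal_le_coeIdeal _).mpr (hFmono n m h))
    exact inv_anti' (hWv0 m) h1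
  -- escape property
  have hesc : ∀ n, ∃ m, ¬((1 / (1 / ((Fid m : Ideal R) : FI))) *
      (1 / (1 / ((Fid m : Ideal R) : FI))) ≤ 1 / (1 / ((Fid n : Ideal R) : FI))) := by
    intro n
    by_contra hc
    push_neg at hc
    have hJJ : (J : FI) * (J : FI) ≤ 1 / (1 / ((Fid n : Ideal R) : FI)) := by
      rw [FractionalIdeal.mul_le]
      intro x hx y hy
      obtain ⟨a, haJ, rfl⟩ := (mem_coeIdeal _).mp hx
      obtain ⟨b, hbJ, rfl⟩ := (mem_coeIdeal _).mp hy
      by_cases ha : a = 0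
      · subst ha
        rw [_root_.map_zero, zero_mul]
        exact zero_mem _
      by_cases hb : b = 0
      · subst hb
        rw [_root_.map_zero, mul_zero]
        exact zero_mem _
      obtain ⟨m1, hm1⟩ := he ⟨a, haJ, ha⟩
      obtain ⟨m2, hm2⟩ := he ⟨b, hbJ, hb⟩
      have haF : a ∈ Fid (max m1 m2) := by
        have := hmemF m1
        rw [hm1] at this
        exact hFmono m1 (max m1 m2) (le_max_left _ _) this
      have hbF : b ∈ Fid (max m1 m2) := by
        have := hmemF m2
        rw [hm2] at this
        exact hFmono m2 (max m1 m2) (le_max_right _ _) this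
      have hmema : algebraMap R (FractionRing R) a ∈
          (1 / (1 / ((Fid (max m1 m2) : Ideal R) : FI)) : FI) :=
        hφleD (max m1 m2) ((mem_coeIdeal _).mpr ⟨a, haF, rfl⟩)
      have hmemb : algebraMap R (FractionRing R) b ∈
          (1 / (1 / ((Fid (max m1 m2) : Ideal R) : FI)) : FI) :=
        hφleD (max m1 m2) ((mem_coeIdeal _).mpr ⟨b, hbF, rfl⟩)
      exact hc (max m1 m2) (FractionalIdeal.mul_mem_mul hmema hmemb)
    -- derive that 1/(F n) = 1, contradiction
    have h1 : ((1 / ((Fid n : Ideal R) : FI)) * (J : FI)) * (J : FI) ≤ 1 := by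
      calc ((1 / ((Fid n : Ideal R) : FI)) * (J : FI)) * (J : FI)
          = (1 / ((Fid n : Ideal R) : FI)) * ((J : FI) * (J : FI)) := by ring
        _ ≤ (1 / ((Fid n : Ideal R) : FI)) * (1 / (1 / ((Fid n : Ideal R) : FI))) :=
            mul_right_mono (a := _) hJJ
        _ = 1 := hDW n
    have h2 : (1 / ((Fid n : Ideal R) : FI)) * (J : FI) ≤ 1 :=
      le_trans ((le_div_iff_mul_le hφJ0).mpr h1) htriv.le
    have h3 : (1 / ((Fid n : Ideal R) : FI)) ≤ 1 :=
      le_trans ((le_div_iff_mul_le hφJ0).mpr h2) htriv.le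
    exact hFnotriv n (le_antisymm h3 (hWv1 n))
  -- build the subsequence by iteration
  set step : ℕ → ℕ := fun p => max p (Classical.choose (hesc p)) with hstep
  set ν : ℕ → ℕ := fun k => step^[k] 0 with hν
  have hνsucc : ∀ k, ν (k + 1) = step (ν k) := by
    intro k
    simp only [hν]
    exact Function.iterate_succ_apply' step k 0
  have hνmono : ∀ k, ν k ≤ ν (k + 1) := by
    intro k
    rw [hνsucc k, hstep]
    exact le_max_left _ _
  refine counting hsh
    (fun k => 1 / (1 / ((Fid (ν k) : Ideal R) : FI)))
    (fun k => 1 / ((Fid (ν k) : Ideal R) : FI))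
    (fun k => hDW (ν k)) (fun k => hD1 (ν k))
    (fun k => hDmono (ν k) (ν (k + 1)) (hνmono k)) ?_
  intro k hle
  have hch := Classical.choose_spec (hesc (ν k))
  apply hch
  have hmle : Classical.choose (hesc (ν k)) ≤ ν (k + 1) := by
    rw [hνsucc k, hstep]
    exact le_max_right _ _
  refine le_trans (fi_sq_mono (hDmono _ _ hmle)) hle

end NOTRIV

section FINAL
variable {R : Type*} [CommRing R] [IsDomain R]
local notation "FI" => FractionalIdeal (nonZeroDivisors R) (FractionRing R)
open SharpAux

theorem all_integral_invertible [Countable R] (hsh : IsSharpDomain R) {I : Ideal R}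
    (hI : I ≠ ⊥) : (I : FI) * (1 / (I : FI)) = 1 := by
  by_contra hni
  have hφI0 : (I : FI) ≠ 0 := coeIdeal_ne_zero.mpr hI
  have hpd := pseudoDedekind hsh (R := R) hI
  have hle1 : (I : FI) * (1 / (I : FI)) ≤ 1 := by
    rw [mul_comm]; exact div_mul_le' hφI0
  have hmul0 : (I : FI) * (1 / (I : FI)) ≠ 0 := by
    intro h0
    apply hφI0
    calc (I : FI) = ((I : FI) * (1 / (I : FI))) * (1 / (1 / (I : FI))) := by
          rw [mul_assoc, hpd, mul_one]
      _ = 0 := by rw [h0, zero_mul]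
  obtain ⟨J, hJ⟩ := le_one_iff_exists_coeIdeal.mp hle1
  have hJb : J ≠ ⊥ := by
    intro h0
    apply hmul0
    rw [← hJ, h0, coeIdeal_bot]
  have hJt : J ≠ ⊤ := by
    intro h0
    rw [h0, coeIdeal_top] at hJ
    exact hni hJ.symm
  have htrivJ : 1 / (J : FI) = 1 := by
    rw [hJ]
    apply le_antisymm
    · have hZ1 : (1 / ((I : FI) * (1 / (I : FI)))) * ((I : FI) * (1 / (I : FI))) ≤ 1 :=
        div_mul_le' hmul0
      have hZ2 : (1 / ((I : FI) * (1 / (I : FI)))) * (I : FI) ≤ 1 / (1 / (I : FI)) :=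
        (le_div_iff_mul_le (inv_ne_zero' hφI0)).mpr (by rwa [← mul_assoc] at hZ1)
      have hZ3 : ((1 / (I : FI)) * (1 / ((I : FI) * (1 / (I : FI))))) * (I : FI) ≤ 1 := by
        calc ((1 / (I : FI)) * (1 / ((I : FI) * (1 / (I : FI))))) * (I : FI)
            = (1 / (I : FI)) * ((1 / ((I : FI) * (1 / (I : FI)))) * (I : FI)) := by ring
          _ ≤ (1 / (I : FI)) * (1 / (1 / (I : FI))) := mul_right_mono (a := _) hZ2
          _ = 1 := hpd
      have hZ4 : (1 / (I : FI)) * (1 / ((I : FI) * (1 / (I : FI)))) ≤ 1 / (I : FI) :=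
        (le_div_iff_mul_le hφI0).mpr hZ3
      calc 1 / ((I : FI) * (1 / (I : FI)))
          = ((1 / (I : FI)) * (1 / (1 / (I : FI)))) * (1 / ((I : FI) * (1 / (I : FI)))) := by
            rw [hpd, one_mul]
        _ = (1 / (1 / (I : FI))) * ((1 / (I : FI)) * (1 / ((I : FI) * (1 / (I : FI))))) := by
            ring
        _ ≤ (1 / (1 / (I : FI))) * (1 / (I : FI)) := mul_right_mono (a := _) hZ4
        _ = 1 := by rw [mul_comm]; exact hpd
    · exact one_le_inv' hmul0 hle1
  exact no_trivial hsh hJb hJt htrivJ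

theorem sharp_isDedekindDomainInv [Countable R] (hsh : IsSharpDomain R) :
    ∀ I ≠ (⊥ : FractionalIdeal (nonZeroDivisors R) (FractionRing R)), I * I⁻¹ = 1 := by
  intro I hI0
  have hI0' : I ≠ 0 := fun h0 => hI0 (h0.trans FractionalIdeal.bot_eq_zero.symm)
  obtain ⟨a, aI, ha, haI⟩ := FractionalIdeal.exists_eq_spanSingleton_mul I
  have halg0 : algebraMap R (FractionRing R) a ≠ 0 :=
    (map_ne_zero_iff _ (IsFractionRing.injective R (FractionRing R))).mpr ha
  have haIb : aI ≠ ⊥ := by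
    intro h0
    apply hI0'
    rw [haI, h0, coeIdeal_bot, mul_zero]
  refine (mul_inv_cancel_iff (K := FractionRing R)).mpr ?_
  refine ⟨spanSingleton (nonZeroDivisors R) (algebraMap R (FractionRing R) a) *
    (1 / ((aI : Ideal R) : FI)), ?_⟩
  have h1 : spanSingleton (nonZeroDivisors R) ((algebraMap R (FractionRing R)) a)⁻¹ *
      spanSingleton (nonZeroDivisors R) ((algebraMap R (FractionRing R)) a) = 1 := by
    rw [spanSingleton_mul_spanSingleton, inv_mul_cancel₀ halg0, spanSingleton_one]
  have h2 := all_integral_invertible hsh haIb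
  calc I * (spanSingleton (nonZeroDivisors R) (algebraMap R (FractionRing R) a) *
      (1 / ((aI : Ideal R) : FI)))
      = (spanSingleton (nonZeroDivisors R) ((algebraMap R (FractionRing R)) a)⁻¹ *
        ((aI : Ideal R) : FI)) * (spanSingleton (nonZeroDivisors R)
          (algebraMap R (FractionRing R) a) * (1 / ((aI : Ideal R) : FI))) := by rw [← haI]
    _ = (spanSingleton (nonZeroDivisors R) ((algebraMap R (FractionRing R)) a)⁻¹ *
        spanSingleton (nonZeroDivisors R) (algebraMap R (FractionRing R) a)) *
        (((aI : Ideal R) : FI) * (1 / ((aI : Ideal R) : FI))) := by ring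
    _ = 1 := by rw [h1, h2, mul_one]

end FINAL

theorem countable_sharp_dedekind (R : Type*) [CommRing R] [IsDomain R]
    [Countable R] (h : IsSharpDomain R) : IsDedekindDomain R :=
  (isDedekindDomain_iff_mul_inv_cancel (K := FractionRing R)).mpr (sharp_isDedekindDomainInv h)
end
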